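/- Let g be a Lie algebra over ℂ and let κ : g × g → ℂ be a symmetric bilinear form which is invariant, i.e. κ([x,y],z) = κ(x,[y,z]) for all x,y,z ∈ g. On the ℂ-vector space ĝ_κ := (g ⊗ ℂ[t,t⁻¹]) ⊕ ℂ define a bilinear bracket by [(x ⊗ f, a), (y ⊗ g', b)] := ([x,y] ⊗ (f·g'), −κ(x,y)·Res(f dg')), extended bilinearly, where the summand ℂ brackets to zero with everything. Then this bracket is alternating and satisfies the Jacobi identity, so ĝ_κ is a Lie algebra over ℂ; moreover the summand ℂ is a central ideal of ĝ_κ and the projection ĝ_κ → g ⊗ ℂ[t,t⁻¹] onto the loop algebra is a surjective Lie algebra homomorphism with kernel ℂ. (This is the affine Kac–Moody algebra at level κ, in its Laurent-polynomial version.) -/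

import Mathlib

open TensorProduct

/-- The formal derivative of a Laurent polynomial: the derivative of `a·tⁿ` is `n·a·tⁿ⁻¹`,
so that the coefficient of `tⁿ` in `f'` is `(n+1)·f_{n+1}`. -/
noncomputable def lderiv (f : LaurentPolynomial ℂ) : LaurentPolynomial ℂ :=
  Finsupp.sum f.coeff fun n a => LaurentPolynomial.C ((n : ℂ) * a) * LaurentPolynomial.T (n - 1)

/-- The residue of a Laurent polynomial: its coefficient of `t⁻¹`. -/
noncomputable def lres (f : LaurentPolynomial ℂ) : ℂ := (f.coeff : ℤ →₀ ℂ) (-1)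

section KacMoodyAux

open LaurentPolynomial

lemma lderiv_single (n : ℤ) (a : ℂ) :
    lderiv (LaurentPolynomial.C a * T n) = LaurentPolynomial.C ((n : ℂ) * a) * T (n - 1) := by
  rw [← single_eq_C_mul_T]
  unfold lderiv
  rw [AddMonoidAlgebra.coeff_single, Finsupp.sum_single_index] <;> simp

lemma lderiv_add (f g : LaurentPolynomial ℂ) : lderiv (f + g) = lderiv f + lderiv g := by
  unfold lderiv
  rw [AddMonoidAlgebra.coeff_add]
  exact Finsupp.sum_add_index' (by intro n; simp) (by intro n a b; rw [mul_add, map_add, add_mul])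

lemma lderiv_smul (c : ℂ) (f : LaurentPolynomial ℂ) : lderiv (c • f) = c • lderiv f := by
  unfold lderiv
  rw [AddMonoidAlgebra.coeff_smul, Finsupp.sum_smul_index (by intro n; simp), Finsupp.smul_sum]
  apply Finsupp.sum_congr
  intro n _
  rw [Algebra.smul_def, LaurentPolynomial.algebraMap_apply]
  simp only [Algebra.algebraMap_self, RingHom.id_apply]
  conv_rhs => rw [← mul_assoc, ← map_mul]
  congr 2
  ring

lemma lres_add (f g : LaurentPolynomial ℂ) : lres (f + g) = lres f + lres g := rfl

lemma lres_smul (c : ℂ) (f : LaurentPolynomial ℂ) : lres (c • f) = c • lres f := rfl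

lemma lderiv_mul (f g : LaurentPolynomial ℂ) :
    lderiv (f * g) = lderiv f * g + f * lderiv g := by
  induction f using LaurentPolynomial.induction_on' with
  | add p q hp hq => rw [add_mul, lderiv_add, hp, hq, lderiv_add]; ring
  | C_mul_T n a =>
    induction g using LaurentPolynomial.induction_on' with
    | add p q hp hq => rw [mul_add, lderiv_add, hp, hq, lderiv_add]; ring
    | C_mul_T m b =>
      have key : (LaurentPolynomial.C a * T n) * (LaurentPolynomial.C b * T m)
          = LaurentPolynomial.C (a * b) * T (n + m) := by
        rw [map_mul, T_add]; ring
      rw [key, lderiv_single, lderiv_single, lderiv_single]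
      have e1 : n + m - 1 = (n - 1) + m := by ring
      have e2 : n + m - 1 = n + (m - 1) := by ring
      have lhs : (((n + m : ℤ) : ℂ)) * (a * b) = (n : ℂ) * (a * b) + (m : ℂ) * (a * b) := by
        push_cast; ring
      rw [lhs, map_add, add_mul]
      congr 1
      · have h1 : ((n : ℂ) * (a * b)) = ((n : ℂ) * a) * b := by ring
        rw [h1, map_mul, e1, T_add]; ring
      · have h2 : ((m : ℂ) * (a * b)) = a * ((m : ℂ) * b) := by ring
        rw [h2, map_mul, e2, T_add]; ring

lemma lres_C_mul_T (r : ℂ) (m : ℤ) : lres (LaurentPolynomial.C r * T m) = if m = -1 then r else 0 := by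
  rw [← single_eq_C_mul_T]
  unfold lres
  rw [AddMonoidAlgebra.coeff_single, Finsupp.single_apply]

lemma lres_lderiv (f : LaurentPolynomial ℂ) : lres (lderiv f) = 0 := by
  induction f using LaurentPolynomial.induction_on' with
  | add p q hp hq => rw [lderiv_add, lres_add, hp, hq, add_zero]
  | C_mul_T n a =>
    rw [lderiv_single, lres_C_mul_T]
    split
    · rename_i h
      have hn : n = 0 := by omega
      subst hn; simp
    · rfl

section Wrappers
variable {𝔤 : Type*} [LieRing 𝔤] [LieAlgebra ℂ 𝔤]

@[simp] lemma tp_add_lie (p q w : LaurentPolynomial ℂ ⊗[ℂ] 𝔤) :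
    ⁅p + q, w⁆ = ⁅p, w⁆ + ⁅q, w⁆ := add_lie p q w

@[simp] lemma tp_lie_add (w p q : LaurentPolynomial ℂ ⊗[ℂ] 𝔤) :
    ⁅w, p + q⁆ = ⁅w, p⁆ + ⁅w, q⁆ := lie_add w p q

@[simp] lemma tp_lie_zero (w : LaurentPolynomial ℂ ⊗[ℂ] 𝔤) :
    ⁅w, (0 : LaurentPolynomial ℂ ⊗[ℂ] 𝔤)⁆ = 0 := lie_zero w

@[simp] lemma tp_zero_lie (w : LaurentPolynomial ℂ ⊗[ℂ] 𝔤) :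
    ⁅(0 : LaurentPolynomial ℂ ⊗[ℂ] 𝔤), w⁆ = 0 := zero_lie w

lemma tp_lie_self (w : LaurentPolynomial ℂ ⊗[ℂ] 𝔤) : ⁅w, w⁆ = 0 := lie_self w

lemma tp_lie_jacobi (u v w : LaurentPolynomial ℂ ⊗[ℂ] 𝔤) :
    ⁅u, ⁅v, w⁆⁆ + ⁅v, ⁅w, u⁆⁆ + ⁅w, ⁅u, v⁆⁆ = 0 := lie_jacobi u v w

lemma tp_smul_lie (c : ℂ) (u v : LaurentPolynomial ℂ ⊗[ℂ] 𝔤) :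
    ⁅c • u, v⁆ = c • ⁅u, v⁆ := by
  have h := smul_lie (algebraMap ℂ (LaurentPolynomial ℂ) c) u v
  rwa [algebraMap_smul, algebraMap_smul] at h

lemma tp_lie_smul (c : ℂ) (u v : LaurentPolynomial ℂ ⊗[ℂ] 𝔤) :
    ⁅u, c • v⁆ = c • ⁅u, v⁆ := by
  have h := lie_smul (algebraMap ℂ (LaurentPolynomial ℂ) c) u v
  rwa [algebraMap_smul, algebraMap_smul] at h

end Wrappers

noncomputable def resForm : LaurentPolynomial ℂ →ₗ[ℂ] LaurentPolynomial ℂ →ₗ[ℂ] ℂ :=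
  LinearMap.mk₂ ℂ (fun f g => lres (f * lderiv g))
    (fun f f' g => by show lres ((f + f') * lderiv g) = lres (f * lderiv g) + lres (f' * lderiv g)
                      rw [add_mul, lres_add])
    (fun c f g => by show lres ((c • f) * lderiv g) = c • lres (f * lderiv g)
                     rw [smul_mul_assoc, lres_smul])
    (fun f g g' => by show lres (f * lderiv (g + g')) = lres (f * lderiv g) + lres (f * lderiv g')
                      rw [lderiv_add, mul_add, lres_add])
    (fun c f g => by show lres (f * lderiv (c • g)) = c • lres (f * lderiv g)
                     rw [lderiv_smul, mul_smul_comm, lres_smul])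

noncomputable def cocycle (𝔤 : Type*) [LieRing 𝔤] [LieAlgebra ℂ 𝔤]
    (κ : 𝔤 →ₗ[ℂ] 𝔤 →ₗ[ℂ] ℂ) :
    (LaurentPolynomial ℂ ⊗[ℂ] 𝔤) →ₗ[ℂ] (LaurentPolynomial ℂ ⊗[ℂ] 𝔤) →ₗ[ℂ] ℂ :=
  - (TensorProduct.curry ((TensorProduct.lid ℂ ℂ).toLinearMap ∘ₗ
      TensorProduct.map (TensorProduct.lift resForm) (TensorProduct.lift κ) ∘ₗ
      (TensorProduct.tensorTensorTensorComm ℂ (LaurentPolynomial ℂ) 𝔤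
        (LaurentPolynomial ℂ) 𝔤).toLinearMap))

lemma cocycle_tmul (𝔤 : Type*) [LieRing 𝔤] [LieAlgebra ℂ 𝔤]
    (κ : 𝔤 →ₗ[ℂ] 𝔤 →ₗ[ℂ] ℂ) (f g : LaurentPolynomial ℂ) (x y : 𝔤) :
    cocycle 𝔤 κ (f ⊗ₜ[ℂ] x) (g ⊗ₜ[ℂ] y) = -(κ x y) * lres (f * lderiv g) := by
  simp only [cocycle, LinearMap.neg_apply, TensorProduct.curry_apply, LinearMap.comp_apply,
    LinearEquiv.coe_coe, TensorProduct.tensorTensorTensorComm_tmul, TensorProduct.map_tmul,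
    TensorProduct.lift.tmul, LinearMap.mk₂_apply, resForm, TensorProduct.lid_tmul,
    smul_eq_mul]
  ring

lemma lres_cyclic (f g h : LaurentPolynomial ℂ) :
    lres (f * lderiv (g * h)) + lres (g * lderiv (h * f)) + lres (h * lderiv (f * g)) = 0 := by
  have h7 : f * lderiv (g * h) + g * lderiv (h * f) + h * lderiv (f * g)
      = lderiv (f * (g * h)) + lderiv (f * (g * h)) := by
    rw [lderiv_mul, lderiv_mul, lderiv_mul, lderiv_mul, lderiv_mul]; ring
  have h8 : lres (f * lderiv (g * h) + g * lderiv (h * f) + h * lderiv (f * g)) = 0 := by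
    rw [h7, lres_add, lres_lderiv]; simp
  rw [lres_add, lres_add] at h8
  exact h8

lemma cocycle_skew (𝔤 : Type*) [LieRing 𝔤] [LieAlgebra ℂ 𝔤]
    (κ : 𝔤 →ₗ[ℂ] 𝔤 →ₗ[ℂ] ℂ) (hsymm : ∀ x y : 𝔤, κ x y = κ y x)
    (u v : LaurentPolynomial ℂ ⊗[ℂ] 𝔤) :
    cocycle 𝔤 κ u v + cocycle 𝔤 κ v u = 0 := by
  induction u using TensorProduct.induction_on with
  | zero => simp
  | add p q hp hq =>
    simp only [map_add, LinearMap.add_apply]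
    linear_combination hp + hq
  | tmul f x =>
    induction v using TensorProduct.induction_on with
    | zero => simp
    | add p q hp hq =>
      simp only [map_add, LinearMap.add_apply]
      linear_combination hp + hq
    | tmul g y =>
      rw [cocycle_tmul, cocycle_tmul]
      have hr : lres (f * lderiv g) + lres (g * lderiv f) = 0 := by
        have hd : f * lderiv g + g * lderiv f = lderiv (f * g) := by rw [lderiv_mul]; ring
        rw [← lres_add, hd, lres_lderiv]
      rw [hsymm y x]
      linear_combination (-(κ x y)) * hr

lemma cocycle_jacobi (𝔤 : Type*) [LieRing 𝔤] [LieAlgebra ℂ 𝔤]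
    (κ : 𝔤 →ₗ[ℂ] 𝔤 →ₗ[ℂ] ℂ) (hsymm : ∀ x y : 𝔤, κ x y = κ y x)
    (hinv : ∀ x y z : 𝔤, κ ⁅x, y⁆ z = κ x ⁅y, z⁆)
    (u v w : LaurentPolynomial ℂ ⊗[ℂ] 𝔤) :
    cocycle 𝔤 κ u ⁅v, w⁆ + cocycle 𝔤 κ v ⁅w, u⁆ + cocycle 𝔤 κ w ⁅u, v⁆ = 0 := by
  induction u using TensorProduct.induction_on with
  | zero => simp
  | add p q hp hq =>
    simp only [map_add, LinearMap.add_apply, tp_lie_add, tp_add_lie]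
    linear_combination hp + hq
  | tmul f x =>
    induction v using TensorProduct.induction_on with
    | zero => simp
    | add p q hp hq =>
      simp only [map_add, LinearMap.add_apply, tp_lie_add, tp_add_lie]
      linear_combination hp + hq
    | tmul g y =>
      induction w using TensorProduct.induction_on with
      | zero => simp
      | add p q hp hq =>
        simp only [map_add, LinearMap.add_apply, tp_lie_add, tp_add_lie]
        linear_combination hp + hq
      | tmul h z =>
        rw [LieAlgebra.ExtendScalars.bracket_tmul, LieAlgebra.ExtendScalars.bracket_tmul,
          LieAlgebra.ExtendScalars.bracket_tmul, cocycle_tmul, cocycle_tmul, cocycle_tmul]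
        have hk1 : κ y ⁅z, x⁆ = κ x ⁅y, z⁆ := by rw [← hinv y z x, hsymm]
        have hk2 : κ z ⁅x, y⁆ = κ x ⁅y, z⁆ := by
          rw [← hinv z x y, hsymm ⁅z, x⁆ y, hk1]
        rw [hk1, hk2]
        linear_combination (-(κ x ⁅y, z⁆)) * lres_cyclic f g h

end KacMoodyAux

/-- The affine Kac–Moody algebra at level `κ` (Laurent-polynomial version).
Let `𝔤` be a Lie algebra over `ℂ` and `κ` a symmetric invariant bilinear form on `𝔤`.
On `ĝ_κ := (𝔤 ⊗ ℂ[t,t⁻¹]) ⊕ ℂ` there is a (unique) bilinear bracket `B` satisfying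
`B (x ⊗ f, a) (y ⊗ g, b) = ([x,y] ⊗ f·g, −κ(x,y)·Res(f dg))`, where `Res(f dg) = Res(f·g')`;
this bracket is alternating and satisfies the Jacobi identity (so `ĝ_κ` is a Lie algebra
over `ℂ`), the summand `ℂ` is central (hence a central ideal), and the projection onto the
loop algebra `ℂ[t,t⁻¹] ⊗ 𝔤` is a surjective Lie algebra homomorphism whose kernel is the
summand `ℂ`. -/
theorem affine_kac_moody_is_lie_algebra
    (𝔤 : Type*) [LieRing 𝔤] [LieAlgebra ℂ 𝔤]
    (κ : 𝔤 →ₗ[ℂ] 𝔤 →ₗ[ℂ] ℂ)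
    (hsymm : ∀ x y : 𝔤, κ x y = κ y x)
    (hinv : ∀ x y z : 𝔤, κ ⁅x, y⁆ z = κ x ⁅y, z⁆) :
    ∃ B : ((LaurentPolynomial ℂ ⊗[ℂ] 𝔤) × ℂ) →ₗ[ℂ]
          ((LaurentPolynomial ℂ ⊗[ℂ] 𝔤) × ℂ) →ₗ[ℂ] ((LaurentPolynomial ℂ ⊗[ℂ] 𝔤) × ℂ),
      -- the defining formula on pure tensors, extended bilinearly
      (∀ (f g : LaurentPolynomial ℂ) (x y : 𝔤) (a b : ℂ),
        B (f ⊗ₜ[ℂ] x, a) (g ⊗ₜ[ℂ] y, b)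
          = ((f * g) ⊗ₜ[ℂ] ⁅x, y⁆, -(κ x y) * lres (f * lderiv g))) ∧
      -- the bracket is alternating
      (∀ v, B v v = 0) ∧
      -- the bracket satisfies the Jacobi identity
      (∀ u v w, B u (B v w) + B v (B w u) + B w (B u v) = 0) ∧
      -- the summand ℂ is a central ideal
      (∀ (a : ℂ) (v), B (0, a) v = 0 ∧ B v (0, a) = 0) ∧
      -- the projection to the loop algebra is a Lie algebra homomorphism ...
      (∀ v w, (B v w).1 = ⁅v.1, w.1⁆) ∧
      -- ... which is surjective ...
      Function.Surjective
        (Prod.fst : (LaurentPolynomial ℂ ⊗[ℂ] 𝔤) × ℂ → LaurentPolynomial ℂ ⊗[ℂ] 𝔤) ∧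
      -- ... with kernel the summand ℂ
      ({v : (LaurentPolynomial ℂ ⊗[ℂ] 𝔤) × ℂ | v.1 = 0}
        = Set.range (fun a : ℂ => ((0 : LaurentPolynomial ℂ ⊗[ℂ] 𝔤), a))) := by
  refine ⟨LinearMap.mk₂ ℂ
      (fun u v => (⁅u.1, v.1⁆, cocycle 𝔤 κ u.1 v.1))
      (fun u u' v => by
        show (⁅u.1 + u'.1, v.1⁆, cocycle 𝔤 κ (u.1 + u'.1) v.1) = _
        rw [tp_add_lie, map_add, LinearMap.add_apply]; rfl)
      (fun c u v => by
        show (⁅c • u.1, v.1⁆, cocycle 𝔤 κ (c • u.1) v.1) = _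
        rw [tp_smul_lie, map_smul, LinearMap.smul_apply]; rfl)
      (fun u v v' => by
        show (⁅u.1, v.1 + v'.1⁆, cocycle 𝔤 κ u.1 (v.1 + v'.1)) = _
        rw [tp_lie_add, map_add]; rfl)
      (fun c u v => by
        show (⁅u.1, c • v.1⁆, cocycle 𝔤 κ u.1 (c • v.1)) = _
        rw [tp_lie_smul, map_smul]; rfl),
    ?_, ?_, ?_, ?_, ?_, ?_, ?_⟩
  · intro f g x y a b
    exact Prod.ext rfl (cocycle_tmul 𝔤 κ f g x y)
  · intro v
    refine Prod.ext (tp_lie_self _) ?_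
    have h := cocycle_skew 𝔤 κ hsymm v.1 v.1
    show cocycle 𝔤 κ v.1 v.1 = (0 : ((LaurentPolynomial ℂ ⊗[ℂ] 𝔤) × ℂ)).2
    show cocycle 𝔤 κ v.1 v.1 = 0
    linear_combination h / 2
  · intro u v w
    refine Prod.ext ?_ ?_
    · show ⁅u.1, ⁅v.1, w.1⁆⁆ + ⁅v.1, ⁅w.1, u.1⁆⁆ + ⁅w.1, ⁅u.1, v.1⁆⁆
        = (0 : ((LaurentPolynomial ℂ ⊗[ℂ] 𝔤) × ℂ)).1
      rw [tp_lie_jacobi]; rfl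
    · show cocycle 𝔤 κ u.1 ⁅v.1, w.1⁆ + cocycle 𝔤 κ v.1 ⁅w.1, u.1⁆
        + cocycle 𝔤 κ w.1 ⁅u.1, v.1⁆ = (0 : ((LaurentPolynomial ℂ ⊗[ℂ] 𝔤) × ℂ)).2
      rw [cocycle_jacobi 𝔤 κ hsymm hinv]; rfl
  · intro a v
    constructor
    · exact Prod.ext (by show ⁅(0 : LaurentPolynomial ℂ ⊗[ℂ] 𝔤), v.1⁆ = _; simp)
        (by show cocycle 𝔤 κ 0 v.1 = _; simp)
    · exact Prod.ext (by show ⁅v.1, (0 : LaurentPolynomial ℂ ⊗[ℂ] 𝔤)⁆ = _; simp)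
        (by show cocycle 𝔤 κ v.1 0 = _; simp)
  · intro v w; rfl
  · intro u; exact ⟨(u, 0), rfl⟩
  · ext v
    constructor
    · intro h; exact ⟨v.2, Prod.ext h.symm rfl⟩
    · rintro ⟨a, rfl⟩; rfl
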